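/- If a region P ⊆ ℝ² is both x-convex and y-convex (orthoconvex), and there exist a horizontal segment δ₁ ⊆ P joining a point with minimal x-coordinate of P to a point with maximal x-coordinate of P, and a vertical segment δ₂ ⊆ P joining a point with minimal y-coordinate of P to a point with maximal y-coordinate of P, then δ₁ and δ₂ intersect in a point M, and every point of P is r-visible from M; hence P is r-star. -/

import Mathlib

/-- The axis-aligned rectangle spanned by two points of the plane. -/
def spanRect (p q : ℝ × ℝ) : Set (ℝ × ℝ) :=
  Set.Icc (min p.1 q.1) (max p.1 q.1) ×ˢ Set.Icc (min p.2 q.2) (max p.2 q.2)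

lemma horiz_between {P : Set (ℝ × ℝ)} {c u v a : ℝ}
    (h : IsPreconnected {p : ℝ × ℝ | p ∈ P ∧ p.2 = c})
    (hu : (u, c) ∈ P) (hv : (v, c) ∈ P)
    (ha : a ∈ Set.uIcc u v) : (a, c) ∈ P := by
  have himg : IsPreconnected (Prod.fst '' {p : ℝ × ℝ | p ∈ P ∧ p.2 = c}) :=
    h.image _ (continuous_fst.continuousOn)
  have hoc := himg.ordConnected
  have hu' : u ∈ Prod.fst '' {p : ℝ × ℝ | p ∈ P ∧ p.2 = c} := ⟨(u, c), ⟨hu, rfl⟩, rfl⟩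
  have hv' : v ∈ Prod.fst '' {p : ℝ × ℝ | p ∈ P ∧ p.2 = c} := ⟨(v, c), ⟨hv, rfl⟩, rfl⟩
  obtain ⟨q, ⟨hqP, hq2⟩, hq1⟩ := hoc.uIcc_subset hu' hv' ha
  have : q = (a, c) := Prod.ext hq1 hq2
  rwa [this] at hqP

lemma vert_between {P : Set (ℝ × ℝ)} {c u v a : ℝ}
    (h : IsPreconnected {p : ℝ × ℝ | p ∈ P ∧ p.1 = c})
    (hu : (c, u) ∈ P) (hv : (c, v) ∈ P)
    (ha : a ∈ Set.uIcc u v) : (c, a) ∈ P := by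
  have himg : IsPreconnected (Prod.snd '' {p : ℝ × ℝ | p ∈ P ∧ p.1 = c}) :=
    h.image _ (continuous_snd.continuousOn)
  have hoc := himg.ordConnected
  have hu' : u ∈ Prod.snd '' {p : ℝ × ℝ | p ∈ P ∧ p.1 = c} := ⟨(c, u), ⟨hu, rfl⟩, rfl⟩
  have hv' : v ∈ Prod.snd '' {p : ℝ × ℝ | p ∈ P ∧ p.1 = c} := ⟨(c, v), ⟨hv, rfl⟩, rfl⟩
  obtain ⟨q, ⟨hqP, hq1⟩, hq2⟩ := hoc.uIcc_subset hu' hv' ha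
  have : q = (c, a) := Prod.ext hq1 hq2
  rwa [this] at hqP

/-- If an orthoconvex compact region `P` contains a horizontal segment `δ₁`
joining a leftmost point to a rightmost point of `P`, and a vertical segment `δ₂` joining
a lowest point to a highest point of `P`, then `δ₁` and `δ₂` intersect in a point
`M = (x₂, y₁)` and every point of `P` is r-visible from `M`; hence `P` is r-star. -/
theorem orthoconvex_with_spanning_segments_is_rStar (P : Set (ℝ × ℝ))
    (hP : IsCompact P) (hne : P.Nonempty)
    (hxconv : ∀ y : ℝ, IsPreconnected {p : ℝ × ℝ | p ∈ P ∧ p.2 = y})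
    (hyconv : ∀ x : ℝ, IsPreconnected {p : ℝ × ℝ | p ∈ P ∧ p.1 = x})
    (xlo xhi ylo yhi y₁ x₂ : ℝ)
    (hxlo : IsLeast (Prod.fst '' P) xlo) (hxhi : IsGreatest (Prod.fst '' P) xhi)
    (hylo : IsLeast (Prod.snd '' P) ylo) (hyhi : IsGreatest (Prod.snd '' P) yhi)
    (hδ₁ : Set.Icc xlo xhi ×ˢ ({y₁} : Set ℝ) ⊆ P)
    (hδ₂ : ({x₂} : Set ℝ) ×ˢ Set.Icc ylo yhi ⊆ P) :
    (x₂, y₁) ∈ (Set.Icc xlo xhi ×ˢ ({y₁} : Set ℝ)) ∩ (({x₂} : Set ℝ) ×ˢ Set.Icc ylo yhi) ∧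
    ∀ p ∈ P, spanRect (x₂, y₁) p ⊆ P := by
  -- bounds for points in P
  have hmemx : ∀ p ∈ P, p.1 ∈ Set.Icc xlo xhi := fun p hp =>
    ⟨hxlo.2 ⟨p, hp, rfl⟩, hxhi.2 ⟨p, hp, rfl⟩⟩
  have hmemy : ∀ p ∈ P, p.2 ∈ Set.Icc ylo yhi := fun p hp =>
    ⟨hylo.2 ⟨p, hp, rfl⟩, hyhi.2 ⟨p, hp, rfl⟩⟩
  have hx₂lo : (x₂, ylo) ∈ P := hδ₂ ⟨rfl, Set.left_mem_Icc.2 (le_trans (hylo.2 ⟨hne.choose, hne.choose_spec, rfl⟩) (hyhi.2 ⟨hne.choose, hne.choose_spec, rfl⟩))⟩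
  have hx₂mem : x₂ ∈ Set.Icc xlo xhi := hmemx _ hx₂lo
  have hy₁P : (xlo, y₁) ∈ P := hδ₁ ⟨Set.left_mem_Icc.2 (le_trans hx₂mem.1 hx₂mem.2), rfl⟩
  have hy₁mem : y₁ ∈ Set.Icc ylo yhi := hmemy _ hy₁P
  refine ⟨⟨⟨hx₂mem, rfl⟩, ⟨rfl, hy₁mem⟩⟩, ?_⟩
  intro p hp q hq
  obtain ⟨hq1, hq2⟩ := hq
  simp only at hq1 hq2
  -- q.1 between x₂ and p.1, q.2 between y₁ and p.2
  have hq1u : q.1 ∈ Set.uIcc x₂ p.1 := by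
    simpa [Set.uIcc] using hq1
  have hq2u : q.2 ∈ Set.uIcc y₁ p.2 := by
    simpa [Set.uIcc] using hq2
  have hpy : p.2 ∈ Set.Icc ylo yhi := hmemy _ hp
  have hpx : p.1 ∈ Set.Icc xlo xhi := hmemx _ hp
  -- (x₂, p.2) ∈ P
  have h1 : (x₂, p.2) ∈ P := hδ₂ ⟨rfl, hpy⟩
  have hpP : (p.1, p.2) ∈ P := by rwa [Prod.mk.eta]
  -- (q.1, p.2) ∈ P
  have h2 : (q.1, p.2) ∈ P := horiz_between (hxconv p.2) h1 hpP hq1u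
  -- q.1 ∈ [xlo, xhi]
  have hq1x : q.1 ∈ Set.Icc xlo xhi := by
    rcases Set.mem_uIcc.1 hq1u with ⟨h, h'⟩ | ⟨h, h'⟩
    · exact ⟨le_trans hx₂mem.1 h, le_trans h' hpx.2⟩
    · exact ⟨le_trans hpx.1 h, le_trans h' hx₂mem.2⟩
  have h3 : (q.1, y₁) ∈ P := hδ₁ ⟨hq1x, rfl⟩
  have h4 : (q.1, q.2) ∈ P := vert_between (hyconv q.1) h3 h2 hq2u
  rwa [Prod.mk.eta] at h4
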